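/- Fix n ≥ 1, let p : 2^n → ℝ be a probability vector with p(σ) > 0 for every σ ∈ 2^n and Σ_{σ∈2^n} p(σ) = 1, let μ_p be the associated n-step Bernoulli measure on 2^ω, and let φ : 2^{<ω} → 2^{<ω} be a non-trivial n-block map. Then μ_p({X ∈ 2^ω : |φ(X↾m)| → ∞ as m → ∞}) = 1; that is, the Turing functional induced by φ is μ_p-almost total. -/

import Mathlib

open Filter MeasureTheory

/-- The length-`m` initial segment of `X ∈ 2^ω`, as a finite binary string. -/
def seg (X : ℕ → Bool) (m : ℕ) : List Bool := (List.range m).map X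

/-- The cylinder `⟦σ⟧` of all sequences extending the string `σ`. -/
def cyl (σ : List Bool) : Set (ℕ → Bool) := {X | seg X σ.length = σ}

/-- `μ` is the `n`-step Bernoulli measure attached to the probability vector `p`
on `2^n`: the measure of the cylinder of a concatenation of length-`n` blocks is
the product of the `p`-values of the blocks. -/
def IsNStepBernoulli (n : ℕ) (p : (Fin n → Bool) → ℝ)
    (μ : Measure (ℕ → Bool)) : Prop :=
  ∀ (k : ℕ) (σs : Fin k → (Fin n → Bool)),
    μ (cyl (List.ofFn (fun i => List.ofFn (σs i))).flatten) =
      ∏ i, ENNReal.ofReal (p (σs i))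

/-- `φ` is an `n`-block map: its value on `σ₁⌢⋯⌢σ_k⌢τ` (each `|σᵢ| = n`, `|τ| < n`)
is `φ(σ₁)⌢⋯⌢φ(σ_k)`. -/
def IsNBlockMap (n : ℕ) (φ : List Bool → List Bool) : Prop :=
  ∀ (σs : List (Fin n → Bool)) (τ : List Bool), τ.length < n →
    φ ((σs.map List.ofFn).flatten ++ τ) = (σs.map (fun f => φ (List.ofFn f))).flatten

/-- block `i` of `X`. -/
def blk (n : ℕ) (X : ℕ → Bool) (i : ℕ) : Fin n → Bool := fun j => X (i * n + j)

lemma seg_add (X : ℕ → Bool) (a b : ℕ) :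
    seg X (a + b) = seg X a ++ (List.range b).map (fun j => X (a + j)) := by
  simp [seg, List.range_add, List.map_map, Function.comp]

lemma ofFn_blk (n : ℕ) (X : ℕ → Bool) (K : ℕ) :
    List.ofFn (blk n X K) = (List.range n).map (fun j => X (K * n + j)) := by
  apply List.ext_getElem (by simp)
  intro i h1 h2
  simp [blk]

lemma seg_mul (n : ℕ) (X : ℕ → Bool) (K : ℕ) :
    seg X (K * n) = (List.ofFn (fun i : Fin K => List.ofFn (blk n X i))).flatten := by
  induction K with
  | zero => simp [seg]
  | succ K ih =>
      rw [Nat.succ_mul, seg_add, ih, List.ofFn_succ']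
      simp only [List.concat_eq_append, List.flatten_concat]
      congr 1
      rw [ofFn_blk]
      simp

lemma flatten_len (n K : ℕ) (σs : Fin K → (Fin n → Bool)) :
    (List.ofFn (fun i : Fin K => List.ofFn (σs i))).flatten.length = K * n := by
  simp [List.length_flatten, List.map_ofFn, Function.comp, List.sum_ofFn, mul_comm]

lemma len_seg_eq (n : ℕ) (hn : 1 ≤ n) (φ : List Bool → List Bool)
    (hφ : ∀ (σs : List (Fin n → Bool)) (τ : List Bool), τ.length < n →
      φ ((σs.map List.ofFn).flatten ++ τ) = (σs.map (fun f => φ (List.ofFn f))).flatten)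
    (X : ℕ → Bool) (m : ℕ) :
    (φ (seg X m)).length =
      ∑ i ∈ Finset.range (m / n), (φ (List.ofFn (blk n X i))).length := by
  have hm : m = (m / n) * n + m % n := by
    rw [mul_comm]; exact (Nat.div_add_mod m n).symm
  have hseg : seg X m =
      ((List.ofFn (fun i : Fin (m / n) => blk n X i)).map List.ofFn).flatten ++
        (List.range (m % n)).map (fun j => X ((m / n) * n + j)) := by
    conv_lhs => rw [hm]
    rw [seg_add, seg_mul]
    congr 1
    rw [List.map_ofFn]
    rfl
  rw [hseg, hφ _ _ (by simpa using Nat.mod_lt m hn)]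
  rw [List.length_flatten, List.map_map, List.map_ofFn, List.sum_ofFn]
  rw [← Fin.sum_univ_eq_sum_range]
  rfl

lemma tendsto_of_inf_blocks (n : ℕ) (hn : 1 ≤ n) (φ : List Bool → List Bool)
    (hφ : ∀ (σs : List (Fin n → Bool)) (τ : List Bool), τ.length < n →
      φ ((σs.map List.ofFn).flatten ++ τ) = (σs.map (fun f => φ (List.ofFn f))).flatten)
    (X : ℕ → Bool)
    (h : ∀ k, ∃ i, k ≤ i ∧ φ (List.ofFn (blk n X i)) ≠ []) :
    Tendsto (fun m => (φ (seg X m)).length) atTop atTop := by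
  set L : ℕ → ℕ := fun K => ∑ i ∈ Finset.range K, (φ (List.ofFn (blk n X i))).length with hL
  have hmono : Monotone L := by
    intro a b hab
    exact Finset.sum_le_sum_of_subset (Finset.range_subset_range.2 hab)
  have hub : ∀ b, ∃ K, b ≤ L K := by
    intro b
    induction b with
    | zero => exact ⟨0, Nat.zero_le _⟩
    | succ b ih =>
        obtain ⟨K, hK⟩ := ih
        obtain ⟨i, hiK, hi⟩ := h K
        refine ⟨i + 1, ?_⟩
        have h1 : 1 ≤ (φ (List.ofFn (blk n X i))).length :=
          Nat.one_le_iff_ne_zero.2 (by simpa using hi)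
        have h2 : L K ≤ L i := hmono hiK
        have h3 : L (i + 1) = L i + (φ (List.ofFn (blk n X i))).length :=
          Finset.sum_range_succ _ _
        omega
  rw [tendsto_atTop_atTop]
  intro b
  obtain ⟨K, hK⟩ := hub b
  refine ⟨K * n, fun m hm => ?_⟩
  rw [len_seg_eq n hn φ hφ]
  have hKm : K ≤ m / n := (Nat.le_div_iff_mul_le (by omega)).2 hm
  exact le_trans hK (hmono hKm)

/-- For a positive probability vector `p` on `2^n`, the associated `n`-step
Bernoulli measure `μ_p`, and a non-trivial `n`-block map `φ`, the induced
functional is `μ_p`-almost total: `μ_p {X : |φ(X↾m)| → ∞} = 1`. -/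
theorem stmt6 (n : ℕ) (hn : 1 ≤ n) (p : (Fin n → Bool) → ℝ)
    (hp : ∀ f : Fin n → Bool, 0 < p f) (hp1 : ∑ f : Fin n → Bool, p f = 1)
    (μ : Measure (ℕ → Bool)) [IsProbabilityMeasure μ]
    (hμ : IsNStepBernoulli n p μ)
    (φ : List Bool → List Bool) (hφ : IsNBlockMap n φ)
    (hnt : ∃ f : Fin n → Bool, φ (List.ofFn f) ≠ []) :
    μ {X : ℕ → Bool | Tendsto (fun m => (φ (seg X m)).length) atTop atTop} = 1 := by
  classical
  obtain ⟨f₀, hf₀⟩ := hnt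
  set B : Finset (Fin n → Bool) := Finset.univ.filter (fun f => φ (List.ofFn f) = []) with hB
  have hf₀B : f₀ ∉ B := by simp [hB, hf₀]
  set q : ℝ := ∑ f ∈ B, p f with hq
  have hq1 : q < 1 := by
    rw [hq, ← hp1]
    exact Finset.sum_lt_sum_of_subset (Finset.subset_univ B) (Finset.mem_univ f₀) hf₀B
      (hp f₀) (fun j _ _ => (hp j).le)
  set q' : ENNReal := ENNReal.ofReal q with hq'
  have hq'1 : q' < 1 := by
    rw [hq', ← ENNReal.ofReal_one]
    exact ENNReal.ofReal_lt_ofReal_iff_of_nonneg (Finset.sum_nonneg fun f _ => (hp f).le)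
      |>.2 hq1
  -- the bad tail events
  set C : ℕ → Set (ℕ → Bool) := fun k => {X | ∀ i, k ≤ i → blk n X i ∈ B} with hC
  have hblkmeas : ∀ i : ℕ, Measurable fun X : ℕ → Bool => blk n X i := fun i =>
    measurable_pi_lambda _ fun j => measurable_pi_apply _
  have hCmeas : ∀ k, MeasurableSet (C k) := by
    intro k
    have : C k = ⋂ i, {X : ℕ → Bool | k ≤ i → blk n X i ∈ B} := by
      ext X; simp [hC]
    rw [this]
    refine MeasurableSet.iInter fun i => ?_
    by_cases hik : k ≤ i
    · have : {X : ℕ → Bool | k ≤ i → blk n X i ∈ B}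
          = (fun X : ℕ → Bool => blk n X i) ⁻¹' (↑B : Set (Fin n → Bool)) := by
        ext X; simp [hik]
      rw [this]
      exact (hblkmeas i) ((↑B : Set (Fin n → Bool)).toFinite.measurableSet)
    · have : {X : ℕ → Bool | k ≤ i → blk n X i ∈ B} = Set.univ := by
        ext X; simp [hik]
      rw [this]; exact MeasurableSet.univ
  -- μ (C k) ≤ q' ^ m
  have hCle : ∀ k m, μ (C k) ≤ q' ^ m := by
    intro k m
    set t : Fin (k + m) → Finset (Fin n → Bool) :=
      fun i => if (i : ℕ) < k then Finset.univ else B with ht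
    have hsub : C k ⊆ ⋃ σs ∈ Fintype.piFinset t,
        cyl (List.ofFn (fun i : Fin (k + m) => List.ofFn (σs i))).flatten := by
      intro X hX
      refine Set.mem_biUnion (x := fun i : Fin (k + m) => blk n X (i : ℕ)) ?_ ?_
      · show (fun i : Fin (k + m) => blk n X (i : ℕ)) ∈ Fintype.piFinset t
        rw [Fintype.mem_piFinset]
        intro i
        rw [ht]
        by_cases hik : (i : ℕ) < k
        · simp [hik]
        · simp only [hik, if_false]
          exact hX i (by omega)
      · show seg X _ = _
        rw [flatten_len, seg_mul]
    calc μ (C k) ≤ ∑ σs ∈ Fintype.piFinset t,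
          μ (cyl (List.ofFn (fun i : Fin (k + m) => List.ofFn (σs i))).flatten) :=
            le_trans (measure_mono hsub) (measure_biUnion_finset_le _ _)
      _ = ∑ σs ∈ Fintype.piFinset t, ∏ i, ENNReal.ofReal (p (σs i)) := by
            exact Finset.sum_congr rfl fun σs _ => hμ (k + m) σs
      _ = ∏ i : Fin (k + m), ∑ x ∈ t i, ENNReal.ofReal (p x) :=
            (Finset.prod_univ_sum t fun _ x => ENNReal.ofReal (p x)).symm
      _ = q' ^ m := by
            have hfac : ∀ i : Fin (k + m), ∑ x ∈ t i, ENNReal.ofReal (p x)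
                = if (i : ℕ) < k then 1 else q' := by
              intro i
              rw [ht]
              by_cases hik : (i : ℕ) < k
              · simp only [hik, if_true]
                rw [← ENNReal.ofReal_sum_of_nonneg (fun f _ => (hp f).le), hp1,
                  ENNReal.ofReal_one]
              · simp only [hik, if_false]
                rw [hq', hq, ENNReal.ofReal_sum_of_nonneg (fun f _ => (hp f).le)]
            simp_rw [hfac]
            rw [Fin.prod_univ_eq_prod_range (fun i => if i < k then 1 else q') (k + m)]
            rw [Finset.prod_range_add]
            rw [Finset.prod_congr rfl (g := fun _ => (1 : ENNReal))
              (fun i hi => by simp [List.mem_range.1 (by simpa using hi)]),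
              Finset.prod_const_one, one_mul]
            rw [Finset.prod_congr rfl (g := fun _ => q') (fun i _ => by simp),
              Finset.prod_const, Finset.card_range]
  have hC0 : ∀ k, μ (C k) = 0 := by
    intro k
    refine le_antisymm ?_ zero_le
    exact ge_of_tendsto' (ENNReal.tendsto_pow_atTop_nhds_zero_of_lt_one hq'1)
      (fun m => hCle k m)
  have hN : μ (⋃ k, C k) = 0 := measure_iUnion_null hC0
  have hNm : MeasurableSet (⋃ k, C k) := MeasurableSet.iUnion hCmeas
  have hcompl : μ (⋃ k, C k)ᶜ = 1 := by
    rw [measure_compl hNm (measure_ne_top μ _), hN, measure_univ, tsub_zero]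
  refine le_antisymm prob_le_one ?_
  rw [← hcompl]
  refine measure_mono ?_
  intro X hX
  simp only [Set.mem_compl_iff, Set.mem_iUnion, not_exists, hC, Set.mem_setOf_eq,
    not_forall] at hX
  refine tendsto_of_inf_blocks n hn φ hφ X ?_
  intro k
  obtain ⟨i, hik, hi⟩ := hX k
  exact ⟨i, hik, by simpa [hB] using hi⟩
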